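/- Let f be a smooth real-valued function on an open interval I ⊆ ℝ with f'' nowhere vanishing. On the open set Ω = {(x,y,z,p,r) ∈ ℝ⁵ : p ∈ I}, define G(x,y,z,p,r) = f(p) and H(x,y,z,p,r) = −r² f'''(p)/f''(p). Then the complete integrability condition Δ H = D³ G holds identically on Ω. -/

import Mathlib

/-- Partial derivative of a function on `ℝ⁵` (coordinates `(x,y,z,p,r)` indexed `0,…,4`)
in the `i`-th coordinate direction. -/
noncomputable def pd (i : Fin 5) (F : (Fin 5 → ℝ) → ℝ) (v : Fin 5 → ℝ) : ℝ :=
  fderiv ℝ F v (Pi.single i 1)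

/-- The total derivative operator `D F = F_x + p F_z + r F_p + H F_r`. -/
noncomputable def Dop (H : (Fin 5 → ℝ) → ℝ) (F : (Fin 5 → ℝ) → ℝ) (v : Fin 5 → ℝ) : ℝ :=
  pd 0 F v + v 3 * pd 2 F v + v 4 * pd 3 F v + H v * pd 4 F v

/-- The operator `Δ F = F_y + G F_z + (DG) F_p + (D²G) F_r`. -/
noncomputable def Delta (G H : (Fin 5 → ℝ) → ℝ) (F : (Fin 5 → ℝ) → ℝ) (v : Fin 5 → ℝ) : ℝ :=
  pd 1 F v + G v * pd 2 F v + Dop H G v * pd 3 F v + Dop H (Dop H G) v * pd 4 F v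

lemma pd_congr_nhds {F G : (Fin 5 → ℝ) → ℝ} {v : Fin 5 → ℝ} (h : F =ᶠ[nhds v] G) (i : Fin 5) :
    pd i F v = pd i G v := by unfold pd; rw [h.fderiv_eq]

lemma pd_proj_mul (i : Fin 5) (h g : ℝ → ℝ) (v : Fin 5 → ℝ)
    (hh : DifferentiableAt ℝ h (v 4)) (hg : DifferentiableAt ℝ g (v 3)) :
    pd i (fun w => h (w 4) * g (w 3)) v =
      deriv h (v 4) * (Pi.single i 1 : Fin 5 → ℝ) 4 * g (v 3)
        + h (v 4) * (deriv g (v 3) * (Pi.single i 1 : Fin 5 → ℝ) 3) := by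
  have h4 : HasFDerivAt (fun w : Fin 5 → ℝ => h (w 4))
      ((deriv h (v 4)) • (ContinuousLinearMap.proj (R := ℝ) (φ := fun _ : Fin 5 => ℝ) 4)) v :=
    hh.hasDerivAt.comp_hasFDerivAt v ((ContinuousLinearMap.proj (R := ℝ) (φ := fun _ : Fin 5 => ℝ) 4).hasFDerivAt)
  have h3 : HasFDerivAt (fun w : Fin 5 → ℝ => g (w 3))
      ((deriv g (v 3)) • (ContinuousLinearMap.proj (R := ℝ) (φ := fun _ : Fin 5 => ℝ) 3)) v :=
    hg.hasDerivAt.comp_hasFDerivAt v ((ContinuousLinearMap.proj (R := ℝ) (φ := fun _ : Fin 5 => ℝ) 3).hasFDerivAt)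
  have hm := h4.fun_mul h3
  rw [pd, hm.fderiv]
  simp [smul_eq_mul]
  ring

lemma pd_proj3 (i : Fin 5) (g : ℝ → ℝ) (v : Fin 5 → ℝ) (hg : DifferentiableAt ℝ g (v 3)) :
    pd i (fun w => g (w 3)) v = deriv g (v 3) * (Pi.single i 1 : Fin 5 → ℝ) 3 := by
  have h3 : HasFDerivAt (fun w : Fin 5 → ℝ => g (w 3))
      ((deriv g (v 3)) • (ContinuousLinearMap.proj (R := ℝ) (φ := fun _ : Fin 5 => ℝ) 3)) v :=
    hg.hasDerivAt.comp_hasFDerivAt v ((ContinuousLinearMap.proj (R := ℝ) (φ := fun _ : Fin 5 => ℝ) 3).hasFDerivAt)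
  rw [pd, h3.fderiv]
  simp [smul_eq_mul]

/-- For `G = f(p)` and `H = −r² f'''(p)/f''(p)` (with `f''` nonvanishing),
the complete integrability condition `Δ H = D³ G` holds identically on
`Ω = {(x,y,z,p,r) : p ∈ I}`. -/
theorem example_is_integrable
    (I : Set ℝ) (hI : IsOpen I) (hI' : Convex ℝ I)
    (f : ℝ → ℝ) (hf : ContDiffOn ℝ (⊤ : ℕ∞) f I)
    (hnd : ∀ p ∈ I, iteratedDeriv 2 f p ≠ 0) :
    ∀ v : Fin 5 → ℝ, v 3 ∈ I →
      Delta (fun v => f (v 3))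
            (fun v => -(v 4) ^ 2 * iteratedDeriv 3 f (v 3) / iteratedDeriv 2 f (v 3))
            (fun v => -(v 4) ^ 2 * iteratedDeriv 3 f (v 3) / iteratedDeriv 2 f (v 3)) v =
      Dop (fun v => -(v 4) ^ 2 * iteratedDeriv 3 f (v 3) / iteratedDeriv 2 f (v 3))
        (Dop (fun v => -(v 4) ^ 2 * iteratedDeriv 3 f (v 3) / iteratedDeriv 2 f (v 3))
          (Dop (fun v => -(v 4) ^ 2 * iteratedDeriv 3 f (v 3) / iteratedDeriv 2 f (v 3))
            (fun v => f (v 3)))) v := by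
  intro v hp
  have hΩ : IsOpen {w : Fin 5 → ℝ | w 3 ∈ I} := hI.preimage (continuous_apply 3)
  -- smoothness of iterated derivatives
  have hiter : ∀ n : ℕ, ContDiffOn ℝ (⊤ : ℕ∞) (iteratedDeriv n f) I := by
    intro n
    induction n with
    | zero => simpa [iteratedDeriv_zero] using hf
    | succ n ih =>
      rw [iteratedDeriv_succ]
      exact ih.deriv_of_isOpen hI (by simp)
  have hdiffI : ∀ (n : ℕ), ∀ q ∈ I, DifferentiableAt ℝ (iteratedDeriv n f) q := by
    intro n q hq
    exact ((hiter n).contDiffAt (hI.mem_nhds hq)).differentiableAt (by simp)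
  have hdf : ∀ q ∈ I, DifferentiableAt ℝ f q := by
    intro q hq
    have := hdiffI 0 q hq
    rwa [iteratedDeriv_zero] at this
  have hda : ∀ q ∈ I, DifferentiableAt ℝ (deriv f) q := by
    intro q hq
    have := hdiffI 1 q hq
    rwa [iteratedDeriv_one] at this
  have e1 : deriv (deriv f) = iteratedDeriv 2 f := by
    rw [iteratedDeriv_succ, iteratedDeriv_one]
  have e2 : deriv (iteratedDeriv 2 f) = iteratedDeriv 3 f := (iteratedDeriv_succ).symm
  have e3 : deriv (iteratedDeriv 3 f) = iteratedDeriv 4 f := (iteratedDeriv_succ).symm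
  set a := deriv f with ha
  set b := iteratedDeriv 2 f with hbdef
  set c := iteratedDeriv 3 f with hcdef
  set d := iteratedDeriv 4 f with hddef
  set G : (Fin 5 → ℝ) → ℝ := fun v => f (v 3) with hG
  set HH : (Fin 5 → ℝ) → ℝ := fun v => -(v 4) ^ 2 * c (v 3) / b (v 3) with hHH
  -- pd of G
  have hpdG : ∀ (i : Fin 5), ∀ w : Fin 5 → ℝ, w 3 ∈ I →
      pd i G w = a (w 3) * (Pi.single i 1 : Fin 5 → ℝ) 3 :=
    fun i w hw => pd_proj3 i f w (hdf _ hw)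
  -- pd of HH
  have hHrw : HH = fun w : Fin 5 → ℝ => (fun r : ℝ => -r ^ 2) (w 4) * (fun q => c q / b q) (w 3) := by
    funext w; simp only [hHH]; ring
  have hgHd : ∀ q ∈ I, DifferentiableAt ℝ (fun q => c q / b q) q :=
    fun q hq => (hdiffI 3 q hq).div (hdiffI 2 q hq) (hnd q hq)
  have hgHderiv : ∀ q ∈ I, deriv (fun q => c q / b q) q = (d q * b q - c q * c q) / (b q) ^ 2 := by
    intro q hq
    rw [deriv_fun_div (hdiffI 3 q hq) (hdiffI 2 q hq) (hnd q hq), e2, e3]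
  have hpdHH : ∀ (i : Fin 5), ∀ w : Fin 5 → ℝ, w 3 ∈ I →
      pd i HH w = -(2 * w 4) * (Pi.single i 1 : Fin 5 → ℝ) 4 * (c (w 3) / b (w 3))
        + -(w 4) ^ 2 * ((d (w 3) * b (w 3) - c (w 3) * c (w 3)) / (b (w 3)) ^ 2
            * (Pi.single i 1 : Fin 5 → ℝ) 3) := by
    intro i w hw
    have h2 : pd i (fun w : Fin 5 → ℝ => (fun r : ℝ => -r ^ 2) (w 4) * (fun q => c q / b q) (w 3)) w =
        deriv (fun r : ℝ => -r ^ 2) (w 4) * (Pi.single i 1 : Fin 5 → ℝ) 4 * (c (w 3) / b (w 3))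
          + (fun r : ℝ => -r ^ 2) (w 4) * (deriv (fun q => c q / b q) (w 3)
            * (Pi.single i 1 : Fin 5 → ℝ) 3) :=
      pd_proj_mul i (fun r : ℝ => -r ^ 2) (fun q => c q / b q) w (by fun_prop) (hgHd _ hw)
    rw [hHrw, h2, hgHderiv _ hw]
    have h3 : deriv (fun r : ℝ => -r ^ 2) (w 4) = -(2 * w 4) := by simp
    rw [h3]
  -- closed form of K1 = Dop HH G
  have hK1 : ∀ w : Fin 5 → ℝ, w 3 ∈ I → Dop HH G w = w 4 * a (w 3) := by
    intro w hw
    simp only [Dop, hpdG _ _ hw]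
    simp [Pi.single_apply]
  have hpdK1 : ∀ (i : Fin 5), ∀ w : Fin 5 → ℝ, w 3 ∈ I →
      pd i (Dop HH G) w = 1 * (Pi.single i 1 : Fin 5 → ℝ) 4 * a (w 3)
        + w 4 * (b (w 3) * (Pi.single i 1 : Fin 5 → ℝ) 3) := by
    intro i w hw
    have hev : Dop HH G =ᶠ[nhds w] (fun w : Fin 5 → ℝ => w 4 * a (w 3)) :=
      Filter.eventuallyEq_of_mem (hΩ.mem_nhds hw) hK1
    rw [pd_congr_nhds hev i]
    have h2 : pd i (fun w : Fin 5 → ℝ => w 4 * a (w 3)) w =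
        deriv (fun r : ℝ => r) (w 4) * (Pi.single i 1 : Fin 5 → ℝ) 4 * a (w 3)
          + w 4 * (deriv a (w 3) * (Pi.single i 1 : Fin 5 → ℝ) 3) :=
      pd_proj_mul i (fun r : ℝ => r) a w differentiableAt_fun_id (hda _ hw)
    rw [h2, e1]
    norm_num
  -- closed form of K2 = Dop HH (Dop HH G)
  have hK2 : ∀ w : Fin 5 → ℝ, w 3 ∈ I →
      Dop HH (Dop HH G) w = (w 4) ^ 2 * (b (w 3) - c (w 3) * a (w 3) / b (w 3)) := by
    intro w hw
    simp only [Dop]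
    rw [hpdK1 0 w hw, hpdK1 2 w hw, hpdK1 3 w hw, hpdK1 4 w hw]
    simp only [hHH]
    simp [Pi.single_apply]
    field_simp [hnd (w 3) hw]
    ring
  have hg2d : ∀ q ∈ I, DifferentiableAt ℝ (fun q => b q - c q * a q / b q) q :=
    fun q hq => (hdiffI 2 q hq).sub
      (((hdiffI 3 q hq).mul (hda q hq)).div (hdiffI 2 q hq) (hnd q hq))
  have hg2deriv : ∀ q ∈ I, deriv (fun q => b q - c q * a q / b q) q =
      c q - ((d q * a q + c q * b q) * b q - c q * a q * c q) / (b q) ^ 2 := by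
    intro q hq
    rw [deriv_fun_sub (hdiffI 2 q hq)
          (((hdiffI 3 q hq).fun_mul (hda q hq)).fun_div (hdiffI 2 q hq) (hnd q hq)),
        deriv_fun_div ((hdiffI 3 q hq).fun_mul (hda q hq)) (hdiffI 2 q hq) (hnd q hq),
        deriv_fun_mul (hdiffI 3 q hq) (hda q hq), e1, e2, e3]
  have hpdK2 : ∀ i : Fin 5, pd i (Dop HH (Dop HH G)) v =
      2 * v 4 * (Pi.single i 1 : Fin 5 → ℝ) 4 * (b (v 3) - c (v 3) * a (v 3) / b (v 3))
        + (v 4) ^ 2 * ((c (v 3) - ((d (v 3) * a (v 3) + c (v 3) * b (v 3)) * b (v 3)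
            - c (v 3) * a (v 3) * c (v 3)) / (b (v 3)) ^ 2)
          * (Pi.single i 1 : Fin 5 → ℝ) 3) := by
    intro i
    have hev : Dop HH (Dop HH G) =ᶠ[nhds v]
        (fun w : Fin 5 → ℝ => (w 4) ^ 2 * (b (w 3) - c (w 3) * a (w 3) / b (w 3))) :=
      Filter.eventuallyEq_of_mem (hΩ.mem_nhds hp) hK2
    rw [pd_congr_nhds hev i]
    have h2 : pd i (fun w : Fin 5 → ℝ => (w 4) ^ 2 * (b (w 3) - c (w 3) * a (w 3) / b (w 3))) v =
        deriv (fun r : ℝ => r ^ 2) (v 4) * (Pi.single i 1 : Fin 5 → ℝ) 4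
            * (b (v 3) - c (v 3) * a (v 3) / b (v 3))
          + (v 4) ^ 2 * (deriv (fun q => b q - c q * a q / b q) (v 3)
            * (Pi.single i 1 : Fin 5 → ℝ) 3) :=
      pd_proj_mul i (fun r : ℝ => r ^ 2) (fun q => b q - c q * a q / b q) v
        (by fun_prop) (hg2d _ hp)
    rw [h2, hg2deriv _ hp]
    have : deriv (fun r : ℝ => r ^ 2) (v 4) = 2 * v 4 := by simp
    rw [this]
  -- final computation
  simp only [Delta]
  rw [hK1 v hp, hK2 v hp]
  simp only [Dop]
  rw [hpdHH 1 v hp, hpdHH 2 v hp, hpdHH 3 v hp, hpdHH 4 v hp,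
      hpdK2 0, hpdK2 2, hpdK2 3, hpdK2 4]
  simp only [hHH, hG]
  simp [Pi.single_apply]
  field_simp [hnd (v 3) hp]
  ring
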